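/- Let R be a commutative ring and let ζ ∈ R satisfy ζ^m = 1 for some integer m ≥ 1. The ring homomorphism ℤ[q] → R[[t]] sending q to ζ + t maps (q;q)_n into the ideal (t^{⌊n/m⌋}) for every n, and hence induces a ring homomorphism ι_ζ : Ẑ[q]^ → R[[t]] ≅ lim_n R[t]/(t^{⌊n/m⌋}), characterized by the property that for every n the composite of ι_ζ with reduction modulo t^{⌊n/m⌋} equals the composite of π_n with the induced map ℤ[q]/((q;q)_n) → R[t]/(t^{⌊n/m⌋}). In particular ι_ζ ∘ η : ℤ[q] → R[[t]] is the evaluation q ↦ ζ + t. -/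

import Mathlib

set_option maxHeartbeats 1000000
set_option synthInstance.maxHeartbeats 400000


open Polynomial

/-- `(q;q)_n = ∏_{i=1}^n (q^i - 1)` in `ℤ[q]`. -/
noncomputable def qPoch (n : ℕ) : Polynomial ℤ :=
  ∏ i ∈ Finset.range n, (X ^ (i + 1) - 1)

lemma qPoch_dvd_succ (n : ℕ) : qPoch n ∣ qPoch (n + 1) :=
  ⟨X ^ (n + 1) - 1, by rw [qPoch, qPoch, Finset.prod_range_succ]⟩

/-- The canonical projection `ℤ[q]/((q;q)_{n+1}) → ℤ[q]/((q;q)_n)`. -/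
noncomputable def habiroTrans (n : ℕ) :
    (Polynomial ℤ ⧸ Ideal.span {qPoch (n + 1)}) →+* Polynomial ℤ ⧸ Ideal.span {qPoch n} :=
  Ideal.Quotient.factor
    (Ideal.span_singleton_le_span_singleton.mpr (qPoch_dvd_succ n))

/-- The Habiro ring `lim_n ℤ[q]/((q;q)_n)`, realized as the subring of compatible
sequences in `∏_n ℤ[q]/((q;q)_n)`. -/
noncomputable def HabiroRing : Subring (∀ n : ℕ, Polynomial ℤ ⧸ Ideal.span {qPoch n}) where
  carrier := {x | ∀ n, habiroTrans n (x (n + 1)) = x n}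
  mul_mem' {a b} ha hb n := by
    simp only [Pi.mul_apply, map_mul, ha n, hb n]
  one_mem' n := by simp only [Pi.one_apply, map_one]
  add_mem' {a b} ha hb n := by
    simp only [Pi.add_apply, map_add, ha n, hb n]
  zero_mem' n := by simp only [Pi.zero_apply, map_zero]
  neg_mem' {a} ha n := by simp only [Pi.neg_apply, map_neg, ha n]

/-- The canonical map `η : ℤ[q] → Ẑ[q]^`. -/
noncomputable def habiroEta : Polynomial ℤ →+* HabiroRing :=
  RingHom.codRestrict (Pi.ringHom fun n => Ideal.Quotient.mk (Ideal.span {qPoch n}))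
    HabiroRing (fun _ _ => Ideal.Quotient.factor_mk _ _)

/-- The projection `π_n : Ẑ[q]^ → ℤ[q]/((q;q)_n)`. -/
noncomputable def habiroPi (n : ℕ) : HabiroRing →+* Polynomial ℤ ⧸ Ideal.span {qPoch n} :=
  (Pi.evalRingHom _ n).comp HabiroRing.subtype

/-- The evaluation `ℤ[q] → R[[t]]`, `q ↦ ζ + t`. -/
noncomputable def evalZetaPlusT (R : Type*) [CommRing R] (ζ : R) :
    Polynomial ℤ →+* PowerSeries R :=
  Polynomial.eval₂RingHom (Int.castRingHom (PowerSeries R))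
    (PowerSeries.C ζ + PowerSeries.X)

/- ## Auxiliary lemmas -/

lemma habiro_part1 {R : Type*} [CommRing R] (ζ : R) (m : ℕ) (hm : 1 ≤ m)
    (hζ : ζ ^ m = 1) (n : ℕ) :
    evalZetaPlusT R ζ (qPoch n) ∈
      Ideal.span {(PowerSeries.X : PowerSeries R) ^ (n / m)} := by
  clear hm
  rw [Ideal.mem_span_singleton]
  have h1 : evalZetaPlusT R ζ (qPoch n) =
      ∏ j ∈ Finset.Ioc 0 n, ((PowerSeries.C ζ + PowerSeries.X) ^ j - 1) := by
    rw [qPoch, map_prod]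
    rw [show Finset.Ioc 0 n = Finset.Ico 1 (n + 1) by
      rw [Finset.Ico_add_one_right_eq_Icc, ← Finset.Icc_add_one_left_eq_Ioc, zero_add]]
    rw [Finset.prod_Ico_eq_prod_range]
    simp only [Nat.add_sub_cancel]
    apply Finset.prod_congr rfl
    intro i _
    simp [evalZetaPlusT, add_comm 1 i]
  rw [h1]
  set T : Finset ℕ := {x ∈ Finset.Ioc 0 n | m ∣ x} with hT
  have hcard : T.card = n / m := Nat.Ioc_filter_dvd_card_eq_div n m
  calc (PowerSeries.X : PowerSeries R) ^ (n / m)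
      = ∏ _j ∈ T, (PowerSeries.X : PowerSeries R) := by
        rw [Finset.prod_const, hcard]
    _ ∣ ∏ j ∈ T, ((PowerSeries.C ζ + PowerSeries.X) ^ j - 1) := by
        apply Finset.prod_dvd_prod_of_dvd
        intro j hj
        rw [hT, Finset.mem_filter] at hj
        obtain ⟨c, hc⟩ := hj.2
        rw [PowerSeries.X_dvd_iff]
        simp [hc, pow_mul, hζ]
    _ ∣ _ := Finset.prod_dvd_prod_of_subset _ _ _ (Finset.filter_subset _ _)

lemma habiroPi_compat {n n' : ℕ} (h : n ≤ n') (x : HabiroRing) (f : Polynomial ℤ)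
    (hf : habiroPi n' x = Ideal.Quotient.mk (Ideal.span {qPoch n'}) f) :
    habiroPi n x = Ideal.Quotient.mk (Ideal.span {qPoch n}) f := by
  induction n', h using Nat.le_induction with
  | base => exact hf
  | succ n' hn ih =>
    apply ih
    have h2 : habiroTrans n' (habiroPi (n' + 1) x) = habiroPi n' x := x.2 n'
    rw [← h2, hf, habiroTrans, Ideal.Quotient.factor_mk (Ideal.span_singleton_le_span_singleton.mpr (qPoch_dvd_succ n'))]

lemma coeff_eval_eq {R : Type*} [CommRing R] (ζ : R) (m : ℕ) (hm : 1 ≤ m) (hζ : ζ ^ m = 1)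
    {n k : ℕ} (hk : k < n / m) {f g : Polynomial ℤ}
    (h : Ideal.Quotient.mk (Ideal.span {qPoch n}) f =
      Ideal.Quotient.mk (Ideal.span {qPoch n}) g) :
    PowerSeries.coeff k (evalZetaPlusT R ζ f) =
      PowerSeries.coeff k (evalZetaPlusT R ζ g) := by
  have hmem : f - g ∈ Ideal.span {qPoch n} := Ideal.Quotient.eq.mp h
  obtain ⟨c, hc⟩ := Ideal.mem_span_singleton.mp hmem
  have hdvd : (PowerSeries.X : PowerSeries R) ^ (n / m) ∣ evalZetaPlusT R ζ (f - g) := by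
    rw [hc, map_mul]
    exact Dvd.dvd.mul_right (Ideal.mem_span_singleton.mp (habiro_part1 ζ m hm hζ n)) _
  rw [PowerSeries.X_pow_dvd_iff] at hdvd
  have h2 := hdvd k hk
  rwa [map_sub, map_sub, sub_eq_zero] at h2

/-- A choice of lift of `π_n x` to `ℤ[q]`. -/
noncomputable def habiroLift (n : ℕ) (x : HabiroRing) : Polynomial ℤ :=
  (Ideal.Quotient.mk_surjective (habiroPi n x)).choose

lemma habiroLift_spec (n : ℕ) (x : HabiroRing) :
    habiroPi n x = Ideal.Quotient.mk (Ideal.span {qPoch n}) (habiroLift n x) :=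
  ((Ideal.Quotient.mk_surjective (habiroPi n x)).choose_spec).symm

lemma habiro_lt_div {m : ℕ} (hm : 1 ≤ m) (k : ℕ) : k < m * (k + 1) / m := by
  rw [Nat.mul_div_cancel_left _ hm]
  omega

/-- The underlying function of `ι_ζ`. -/
noncomputable def iotaFun (R : Type*) [CommRing R] (ζ : R) (m : ℕ) (x : HabiroRing) :
    PowerSeries R :=
  PowerSeries.mk fun k =>
    PowerSeries.coeff k (evalZetaPlusT R ζ (habiroLift (m * (k + 1)) x))

lemma iotaFun_coeff {R : Type*} [CommRing R] (ζ : R) (m : ℕ) (hm : 1 ≤ m) (hζ : ζ ^ m = 1)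
    (x : HabiroRing) {n : ℕ} {f : Polynomial ℤ}
    (hf : habiroPi n x = Ideal.Quotient.mk (Ideal.span {qPoch n}) f)
    {k : ℕ} (hk : k < n / m) :
    PowerSeries.coeff k (iotaFun R ζ m x) = PowerSeries.coeff k (evalZetaPlusT R ζ f) := by
  set N := max n (m * (k + 1)) with hN
  have hNs : habiroPi N x =
      Ideal.Quotient.mk (Ideal.span {qPoch N}) (habiroLift N x) := habiroLift_spec N x
  have h1 : habiroPi n x =
      Ideal.Quotient.mk (Ideal.span {qPoch n}) (habiroLift N x) :=
    habiroPi_compat (le_max_left _ _) x _ hNs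
  have h2 : habiroPi (m * (k + 1)) x =
      Ideal.Quotient.mk (Ideal.span {qPoch (m * (k + 1))}) (habiroLift N x) :=
    habiroPi_compat (le_max_right _ _) x _ hNs
  rw [iotaFun, PowerSeries.coeff_mk]
  have e1 : Ideal.Quotient.mk (Ideal.span {qPoch (m * (k + 1))})
      (habiroLift (m * (k + 1)) x) =
      Ideal.Quotient.mk (Ideal.span {qPoch (m * (k + 1))}) (habiroLift N x) :=
    (habiroLift_spec _ x).symm.trans h2
  have e2 : Ideal.Quotient.mk (Ideal.span {qPoch n}) f =
      Ideal.Quotient.mk (Ideal.span {qPoch n}) (habiroLift N x) := hf.symm.trans h1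
  rw [coeff_eval_eq ζ m hm hζ (habiro_lt_div hm k) e1,
    coeff_eval_eq ζ m hm hζ hk e2]

lemma iotaFun_char {R : Type*} [CommRing R] (ζ : R) (m : ℕ) (hm : 1 ≤ m) (hζ : ζ ^ m = 1)
    (x : HabiroRing) {n : ℕ} {f : Polynomial ℤ}
    (hf : habiroPi n x = Ideal.Quotient.mk (Ideal.span {qPoch n}) f) :
    iotaFun R ζ m x - evalZetaPlusT R ζ f ∈
      Ideal.span {(PowerSeries.X : PowerSeries R) ^ (n / m)} := by
  rw [Ideal.mem_span_singleton, PowerSeries.X_pow_dvd_iff]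
  intro k hk
  rw [map_sub, iotaFun_coeff ζ m hm hζ x hf hk, sub_self]

/-- `ι_ζ` as a ring homomorphism. -/
noncomputable def iotaHom (R : Type*) [CommRing R] (ζ : R) (m : ℕ) (hm : 1 ≤ m)
    (hζ : ζ ^ m = 1) : HabiroRing →+* PowerSeries R where
  toFun := iotaFun R ζ m
  map_one' := by
    apply PowerSeries.ext
    intro k
    have h1 : habiroPi (m * (k + 1)) (1 : HabiroRing) =
        Ideal.Quotient.mk (Ideal.span {qPoch (m * (k + 1))}) 1 := by
      rw [map_one, map_one]
    rw [iotaFun_coeff ζ m hm hζ 1 h1 (habiro_lt_div hm k), map_one]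
  map_mul' x y := by
    apply PowerSeries.ext
    intro k
    set N := m * (k + 1) with hNdef
    have hx := habiroLift_spec N x
    have hy := habiroLift_spec N y
    have hxy : habiroPi N (x * y) = Ideal.Quotient.mk (Ideal.span {qPoch N})
        (habiroLift N x * habiroLift N y) := by
      rw [map_mul, map_mul, hx, hy]
    have d1 := iotaFun_char ζ m hm hζ x hx
    have d2 := iotaFun_char ζ m hm hζ y hy
    have dm : iotaFun R ζ m x * iotaFun R ζ m y -
        evalZetaPlusT R ζ (habiroLift N x) * evalZetaPlusT R ζ (habiroLift N y) ∈
        Ideal.span {(PowerSeries.X : PowerSeries R) ^ (N / m)} :=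
      Ideal.mul_sub_mul_mem _ d1 d2
    rw [Ideal.mem_span_singleton, PowerSeries.X_pow_dvd_iff] at dm
    have h2 := dm k (habiro_lt_div hm k)
    rw [map_sub, sub_eq_zero] at h2
    rw [iotaFun_coeff ζ m hm hζ (x * y) hxy (habiro_lt_div hm k), map_mul, h2]
  map_zero' := by
    apply PowerSeries.ext
    intro k
    have h1 : habiroPi (m * (k + 1)) (0 : HabiroRing) =
        Ideal.Quotient.mk (Ideal.span {qPoch (m * (k + 1))}) 0 := by
      rw [map_zero, map_zero]
    rw [iotaFun_coeff ζ m hm hζ 0 h1 (habiro_lt_div hm k), map_zero]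
  map_add' x y := by
    apply PowerSeries.ext
    intro k
    set N := m * (k + 1) with hNdef
    have hx := habiroLift_spec N x
    have hy := habiroLift_spec N y
    have hxy : habiroPi N (x + y) = Ideal.Quotient.mk (Ideal.span {qPoch N})
        (habiroLift N x + habiroLift N y) := by
      rw [map_add, map_add, hx, hy]
    have d1 := iotaFun_char ζ m hm hζ x hx
    have d2 := iotaFun_char ζ m hm hζ y hy
    have dm : iotaFun R ζ m x + iotaFun R ζ m y -
        (evalZetaPlusT R ζ (habiroLift N x) + evalZetaPlusT R ζ (habiroLift N y)) ∈
        Ideal.span {(PowerSeries.X : PowerSeries R) ^ (N / m)} := by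
      have := Ideal.add_mem _ d1 d2
      convert this using 1
      ring
    rw [Ideal.mem_span_singleton, PowerSeries.X_pow_dvd_iff] at dm
    have h2 := dm k (habiro_lt_div hm k)
    rw [map_sub, sub_eq_zero] at h2
    rw [iotaFun_coeff ζ m hm hζ (x + y) hxy (habiro_lt_div hm k), map_add, h2]

theorem habiro_iota_zeta (R : Type*) [CommRing R] (ζ : R) (m : ℕ) (hm : 1 ≤ m)
    (hζ : ζ ^ m = 1) :
    (∀ n : ℕ, evalZetaPlusT R ζ (qPoch n) ∈
      Ideal.span {(PowerSeries.X : PowerSeries R) ^ (n / m)}) ∧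
    ∃ ι : HabiroRing →+* PowerSeries R,
      (∀ (n : ℕ) (x : HabiroRing) (f : Polynomial ℤ),
        habiroPi n x = Ideal.Quotient.mk (Ideal.span {qPoch n}) f →
        ι x - evalZetaPlusT R ζ f ∈
          Ideal.span {(PowerSeries.X : PowerSeries R) ^ (n / m)}) ∧
      (∀ ι' : HabiroRing →+* PowerSeries R,
        (∀ (n : ℕ) (x : HabiroRing) (f : Polynomial ℤ),
          habiroPi n x = Ideal.Quotient.mk (Ideal.span {qPoch n}) f →
          ι' x - evalZetaPlusT R ζ f ∈
            Ideal.span {(PowerSeries.X : PowerSeries R) ^ (n / m)}) →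
        ι' = ι) ∧
      (∀ f : Polynomial ℤ, ι (habiroEta f) = evalZetaPlusT R ζ f) := by
  refine ⟨habiro_part1 ζ m hm hζ, iotaHom R ζ m hm hζ, ?_, ?_, ?_⟩
  · intro n x f hf
    exact iotaFun_char ζ m hm hζ x hf
  · intro ι' hι'
    apply RingHom.ext
    intro x
    apply PowerSeries.ext
    intro k
    set N := m * (k + 1) with hNdef
    have hx := habiroLift_spec N x
    have d1 := hι' N x (habiroLift N x) hx
    have d2 : iotaHom R ζ m hm hζ x - evalZetaPlusT R ζ (habiroLift N x) ∈
        Ideal.span {(PowerSeries.X : PowerSeries R) ^ (N / m)} :=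
      iotaFun_char ζ m hm hζ x hx
    have d3 : ι' x - iotaHom R ζ m hm hζ x ∈
        Ideal.span {(PowerSeries.X : PowerSeries R) ^ (N / m)} := by
      have := Ideal.sub_mem _ d1 d2
      convert this using 1
      ring
    rw [Ideal.mem_span_singleton, PowerSeries.X_pow_dvd_iff] at d3
    have h2 := d3 k (habiro_lt_div hm k)
    rwa [map_sub, sub_eq_zero] at h2
  · intro f
    apply PowerSeries.ext
    intro k
    have hf : habiroPi (m * (k + 1)) (habiroEta f) =
        Ideal.Quotient.mk (Ideal.span {qPoch (m * (k + 1))}) f := rfl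
    exact iotaFun_coeff ζ m hm hζ (habiroEta f) hf (habiro_lt_div hm k)
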